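/- arXiv:0704.1313 — 5 statements merged into one kernel-verified Lean document; each statement's English description precedes it below -/
import Mathlib

section
/- If a graph has an odd number of vertices, then its adjacency matrix over the field with two elements is degenerate (has determinant zero). -/
/- The adjacency matrix of a simple graph over the field `ZMod 2`:
entry `(i, j)` is `1` if `i` and `j` are adjacent and `0` otherwise
(in particular, all diagonal entries are `0`). -/
open Classical in
noncomputable def adjM {V : Type} [Fintype V] [DecidableEq V] (G : SimpleGraph V) :
    Matrix V V (ZMod 2) :=
  fun i j => if G.Adj i j then 1 else 0

/-- If a graph has an odd number of vertices, then its adjacency matrix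
over the field with two elements is degenerate (has determinant zero). -/
theorem adjacency_matrix_degenerate_of_odd_card (n : ℕ) (hn : Odd n)
    (G : SimpleGraph (Fin n)) : (adjM G).det = 0 := by
  classical
  set M := adjM G with hM
  have hsymm : ∀ i j, M i j = M j i := by
    intro i j
    simp only [hM, adjM]
    by_cases h : G.Adj i j
    · simp [h, h.symm]
    · rw [if_neg h, if_neg (fun h' => h (G.adj_symm h'))]
  have hdiag : ∀ i, M i i = 0 := by
    intro i
    simp [hM, adjM]
  rw [Matrix.det_apply]
  -- Each term `sign σ • ∏ i, M (σ i) i` equals `∏ i, M (σ i) i` in `ZMod 2`.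
  have hsmul : ∀ (u : ℤˣ) (x : ZMod 2), u • x = x := by
    intro u x
    rcases Int.units_eq_one_or u with h | h <;> subst h
    · simp
    · simp only [Units.smul_def, Units.val_neg, Units.val_one, neg_smul, one_smul]
      exact (CharTwo.neg_eq x)
  set f : Equiv.Perm (Fin n) → ZMod 2 :=
    fun σ => Equiv.Perm.sign σ • ∏ i, M (σ i) i with hf
  have hfval : ∀ σ, f σ = ∏ i, M (σ i) i := fun σ => hsmul _ _
  -- terms for σ and σ⁻¹ agree
  have hpair : ∀ σ : Equiv.Perm (Fin n), f σ⁻¹ = f σ := by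
    intro σ
    rw [hfval, hfval]
    calc ∏ i, M (σ⁻¹ i) i = ∏ j, M (σ⁻¹ (σ j)) (σ j) :=
          (Equiv.prod_comp σ fun i => M (σ⁻¹ i) i).symm
      _ = ∏ j, M j (σ j) := by simp
      _ = ∏ j, M (σ j) j := by simp_rw [hsymm]
  refine Finset.sum_ninvolution (fun σ => σ⁻¹) ?_ ?_ (fun _ => Finset.mem_univ _)
    (fun σ => inv_inv σ)
  · intro σ
    show f σ + f σ⁻¹ = 0
    rw [hpair]
    exact CharTwo.add_self_eq_zero _
  · intro σ hσ hcon
    -- σ = σ⁻¹; σ must have a fixed point, making the product zero.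
    change σ⁻¹ = σ at hcon
    apply hσ
    show f σ = 0
    rw [hfval]
    by_cases hfix : ∃ i, σ i = i
    · obtain ⟨i, hi⟩ := hfix
      exact Finset.prod_eq_zero (Finset.mem_univ i) (by rw [hi]; exact hdiag i)
    · -- no fixed point: pairing i ↦ σ i shows n is even, contradiction
      exfalso
      push_neg at hfix
      have hinv2 : ∀ i, σ (σ i) = i := by
        intro i
        have h : σ⁻¹ (σ i) = i := σ.symm_apply_apply i
        rwa [hcon] at h
      have hsum : (∑ _i : Fin n, (1 : ZMod 2)) = 0 :=
        Finset.sum_ninvolution (fun i => σ i)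
          (fun i => CharTwo.add_self_eq_zero _)
          (fun i _ => hfix i) (fun _ => Finset.mem_univ _) hinv2
      rw [Finset.sum_const, Finset.card_univ, Fintype.card_fin, nsmul_eq_mul,
        mul_one] at hsum
      obtain ⟨k, hk⟩ := hn
      subst hk
      push_cast at hsum
      have h2 : (2 : ZMod 2) = 0 := by decide
      rw [h2, zero_mul, zero_add] at hsum
      exact one_ne_zero hsum
end

section
/- The nondegeneracy of the adjacency matrix of a graph over ℤ/2ℤ is invariant under the local complementation-type move G ↦ G̃_{AB}: for any graph G and ordered pair of distinct vertices A, B, the adjacency matrix of G is nondegenerate if and only if the adjacency matrix of G̃_{AB} is nondegenerate. -/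
/- `tilde G A B` is the graph `G̃_{AB}` obtained from `G` by switching the adjacency to `A`
of every vertex `v ∉ {A, B}` that is adjacent to `B`; all other adjacencies (including the
one between `A` and `B`) are unchanged. -/
def tilde {V : Type} (G : SimpleGraph V) (A B : V) : SimpleGraph V where
  Adj x y := Xor' (G.Adj x y)
    ((x = A ∧ y ≠ A ∧ y ≠ B ∧ G.Adj y B) ∨ (y = A ∧ x ≠ A ∧ x ≠ B ∧ G.Adj x B))
  symm := by
    constructor
    intro x y h
    have hxy : G.Adj x y ↔ G.Adj y x := ⟨fun h => h.symm, fun h => h.symm⟩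
    unfold Xor' Xor at h ⊢
    tauto
  loopless := by
    constructor
    intro x h
    have : ¬ G.Adj x x := G.loopless.irrefl x
    unfold Xor' Xor at h
    tauto

open Matrix in
/-- The nondegeneracy of the adjacency matrix over `ℤ/2ℤ` is invariant
under the move `G ↦ G̃_{AB}`: for any graph `G` and ordered pair of distinct vertices
`A, B`, the adjacency matrix of `G` is nondegenerate iff that of `G̃_{AB}` is. -/
theorem tilde_preserves_nondegenerate {V : Type} [Fintype V] [DecidableEq V]
    (G : SimpleGraph V) (A B : V) (hAB : A ≠ B) :
    (adjM G).det ≠ 0 ↔ (adjM (tilde G A B)).det ≠ 0 := by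
  classical
  set M := adjM G with hM
  set T : Matrix V V (ZMod 2) := Matrix.transvection A B 1 with hT
  have key : adjM (tilde G A B) = T * M * Tᵀ := by
    ext i j
    have hTdef : T = 1 + Matrix.single A B 1 := rfl
    have h1 : ∀ a b, (Matrix.single A B (1 : ZMod 2) * M) a b
        = if a = A then M B b else 0 := by
      intro a b
      by_cases ha : a = A
      · simp [Matrix.mul_apply, Matrix.single, ha, ite_and, Finset.sum_ite_eq']
      · simp [Matrix.mul_apply, Matrix.single, ha, Ne.symm ha]
    have h2 : (M * (Matrix.single A B (1 : ZMod 2))ᵀ) i j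
        = if j = A then M i B else 0 := by
      by_cases hj : j = A
      · simp [Matrix.mul_apply, Matrix.single, Matrix.transpose_apply, hj,
          ite_and, Finset.sum_ite_eq]
      · simp [Matrix.mul_apply, Matrix.single, Matrix.transpose_apply, hj, Ne.symm hj]
    have h3 : (Matrix.single A B (1 : ZMod 2) * M
        * (Matrix.single A B (1 : ZMod 2))ᵀ) i j
        = if i = A ∧ j = A then M B B else 0 := by
      rw [Matrix.mul_apply]
      have step : ∀ k, (Matrix.single A B (1 : ZMod 2) * M) i k
          * (Matrix.single A B (1 : ZMod 2))ᵀ k j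
          = if j = A ∧ k = B then (if i = A then M B k else 0) else 0 := by
        intro k
        rw [Matrix.transpose_apply, h1]
        by_cases hj : j = A <;> by_cases hk : k = B <;>
          simp [Matrix.single, hj, hk] <;> intros <;> simp_all
      rw [Finset.sum_congr rfl (fun k _ => step k)]
      by_cases hi : i = A <;> by_cases hj : j = A <;>
        simp [hi, hj, ite_and, Finset.sum_ite_eq']
    have expand : (T * M * Tᵀ) i j
        = M i j + (if i = A then M B j else 0) + (if j = A then M i B else 0)
          + (if i = A ∧ j = A then M B B else 0) := by
      rw [hTdef]
      simp only [Matrix.transpose_add, Matrix.transpose_one, Matrix.add_mul, Matrix.mul_add,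
        Matrix.one_mul, Matrix.mul_one, Matrix.add_apply, h1 i j, h2, h3]
      ring
    rw [expand]
    have hBB : M B B = 0 := by simp [hM, adjM]
    have htwo : (1 : ZMod 2) + 1 = 0 := by decide
    have xor_ite : ∀ p q : Prop, (if Xor' p q then (1 : ZMod 2) else 0)
        = (if p then 1 else 0) + (if q then 1 else 0) := by
      intro p q
      by_cases hp : p <;> by_cases hq : q <;> simp [Xor', hp, hq, htwo]
    have hLHS : adjM (tilde G A B) i j
        = if (tilde G A B).Adj i j then (1 : ZMod 2) else 0 := rfl
    have hAdj : (tilde G A B).Adj i j ↔ Xor' (G.Adj i j)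
        ((i = A ∧ j ≠ A ∧ j ≠ B ∧ G.Adj j B) ∨ (j = A ∧ i ≠ A ∧ i ≠ B ∧ G.Adj i B)) :=
      Iff.rfl
    have hm : M i j = if G.Adj i j then (1 : ZMod 2) else 0 := rfl
    have hQ : (if ((i = A ∧ j ≠ A ∧ j ≠ B ∧ G.Adj j B) ∨ (j = A ∧ i ≠ A ∧ i ≠ B ∧ G.Adj i B))
          then (1 : ZMod 2) else 0)
        = (if i = A then M B j else 0) + (if j = A then M i B else 0)
          + (if i = A ∧ j = A then M B B else 0) := by
      have hMsymm : ∀ a b, M a b = M b a := by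
        intro a b; simp [hM, adjM, SimpleGraph.adj_comm]
      by_cases hi : i = A <;> by_cases hj : j = A
      · -- both A
        subst hi; subst hj
        have h0 : M B j + M j B = 0 := by
          rw [hMsymm j B]; exact CharTwo.add_self_eq_zero _
        simp [hBB]
        rw [hMsymm j B]
        exact (CharTwo.add_self_eq_zero _).symm
      · -- i = A, j ≠ A
        subst hi
        by_cases hjB : j = B
        · subst hjB
          simp [hj, hBB, Ne.symm hAB, hM, adjM]
        · have : M B j = if G.Adj j B then (1 : ZMod 2) else 0 := by
            simp [hM, adjM, SimpleGraph.adj_comm]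
          simp [hj, hjB, this, Ne.symm hAB]
      · -- j = A, i ≠ A
        subst hj
        by_cases hiB : i = B
        · subst hiB
          simp [hi, hBB, Ne.symm hAB, hM, adjM, SimpleGraph.adj_comm]
        · simp [hi, hiB, hM, adjM, Ne.symm hAB]
      · simp [hi, hj]
    rw [hLHS]
    have hrhs : ((M i j + if i = A then M B j else 0) + if j = A then M i B else 0)
        + (if i = A ∧ j = A then M B B else 0)
        = M i j + (if ((i = A ∧ j ≠ A ∧ j ≠ B ∧ G.Adj j B) ∨ (j = A ∧ i ≠ A ∧ i ≠ B ∧ G.Adj i B))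
            then (1 : ZMod 2) else 0) := by
      rw [hQ]; ring
    rw [hrhs, hm]
    by_cases hp : G.Adj i j <;>
      by_cases hq : ((i = A ∧ j ≠ A ∧ j ≠ B ∧ G.Adj j B) ∨ (j = A ∧ i ≠ A ∧ i ≠ B ∧ G.Adj i B)) <;>
      simp [hAdj, Xor', hp, hq, htwo]
  constructor <;> intro h
  · rw [key, Matrix.det_mul, Matrix.det_mul, Matrix.det_transpose, hT,
      Matrix.det_transvection_of_ne A B hAB 1]
    simpa using h
  · intro hcon
    apply h
    rw [key, Matrix.det_mul, Matrix.det_mul, Matrix.det_transpose, hT,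
      Matrix.det_transvection_of_ne A B hAB 1, hcon]
    ring
end

section
/- The Conway graph invariant satisfies the 4-term relation: for any graph G and any ordered pair of adjacent vertices A, B, one has ν(G) − ν(G'_{AB}) − ν(G̃_{AB}) + ν(G̃'_{AB}) = 0, where ν denotes the Conway graph invariant. -/
/- The Conway graph invariant: `(-y)^(n/2)` if the adjacency matrix over `ℤ/2ℤ` is
nondegenerate (which forces the number `n` of vertices to be even), and `0` otherwise. -/
open Classical in
noncomputable def conway {V : Type} [Fintype V] [DecidableEq V] (G : SimpleGraph V) :
    Polynomial ℂ :=
  if (adjM G).det ≠ 0 then (-(Polynomial.X : Polynomial ℂ)) ^ (Fintype.card V / 2) else 0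

noncomputable def opM {V : Type} [Fintype V] [DecidableEq V]
    (M : Matrix V V (ZMod 2)) (A B : V) : Matrix V V (ZMod 2) :=
  (M.updateRow A (M A + M B)).updateCol A
    fun i => (M.updateRow A (M A + M B)) i A + (M.updateRow A (M A + M B)) i B

lemma det_opM {V : Type} [Fintype V] [DecidableEq V]
    (M : Matrix V V (ZMod 2)) {A B : V} (hne : A ≠ B) :
    (opM M A B).det = M.det := by
  unfold opM
  rw [Matrix.det_updateCol_add_self _ hne, Matrix.det_updateRow_add_self _ hne]

lemma adjM_tilde {V : Type} [Fintype V] [DecidableEq V]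
    (G : SimpleGraph V) {A B : V} (hne : A ≠ B) :
    adjM (tilde G A B) = opM (adjM G) A B := by
  have hBB : ¬ G.Adj B B := G.loopless.irrefl B
  have hsym : ∀ x y, G.Adj x y ↔ G.Adj y x := fun x y => ⟨fun h => h.symm, fun h => h.symm⟩
  ext i j
  simp only [opM, adjM, Matrix.updateCol_apply, Matrix.updateRow_apply, Pi.add_apply,
    tilde]
  by_cases hjA : j = A <;> by_cases hiA : i = A <;>
    by_cases hjB : j = B <;> by_cases hiB : i = B <;>
    subst_vars <;>
    simp_all [Xor', Xor] <;> split_ifs <;> simp_all <;> grind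

lemma adjM_tilde_del {V : Type} [Fintype V] [DecidableEq V]
    (G : SimpleGraph V) {A B : V} (hne : A ≠ B) :
    adjM ((tilde G A B).deleteEdges {s(A, B)}) = opM (adjM (G.deleteEdges {s(A, B)})) A B := by
  have hBB : ¬ G.Adj B B := G.loopless.irrefl B
  have hsym : ∀ x y, G.Adj x y ↔ G.Adj y x := fun x y => ⟨fun h => h.symm, fun h => h.symm⟩
  ext i j
  simp only [opM, adjM, Matrix.updateCol_apply, Matrix.updateRow_apply, Pi.add_apply,
    SimpleGraph.deleteEdges_adj, Set.mem_singleton_iff, Sym2.eq_iff, tilde]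
  by_cases hjA : j = A <;> by_cases hiA : i = A <;>
    by_cases hjB : j = B <;> by_cases hiB : i = B <;>
    subst_vars <;>
    simp_all [Xor', Xor] <;> split_ifs <;> simp_all <;> grind [SimpleGraph.deleteEdges_adj, Sym2.eq_iff]

/-- The Conway graph invariant satisfies the 4-term relation:
for any graph `G` and any ordered pair of adjacent vertices `A, B`,
`ν(G) − ν(G'_{AB}) − ν(G̃_{AB}) + ν(G̃'_{AB}) = 0`. -/
theorem conway_four_term {V : Type} [Fintype V] [DecidableEq V]
    (G : SimpleGraph V) (A B : V) (hAB : G.Adj A B) :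
    conway G - conway (G.deleteEdges {s(A, B)}) - conway (tilde G A B)
      + conway ((tilde G A B).deleteEdges {s(A, B)}) = 0 := by
  have hne : A ≠ B := G.ne_of_adj hAB
  have h1 : conway (tilde G A B) = conway G := by
    unfold conway
    rw [adjM_tilde G hne, det_opM _ hne]
  have h2 : conway ((tilde G A B).deleteEdges {s(A, B)})
      = conway (G.deleteEdges {s(A, B)}) := by
    unfold conway
    rw [adjM_tilde_del G hne, det_opM _ hne]
  rw [h1, h2]
  ring
end

section
/- A mutation of a chord diagram preserves its intersection graph: if a chord diagram D' is obtained from D by rotating or reflecting a share, then D and D' have isomorphic intersection graphs. -/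
/- A chord diagram with `n` chords: a fixed-point-free involution of the `2n` cyclically
ordered points on the circle. -/
structure ChordDiagram (n : ℕ) where
  σ : Equiv.Perm (Fin (2 * n))
  invol : ∀ i, σ (σ i) = i
  nofix : ∀ i, σ i ≠ i

namespace ChordDiagram

variable {n : ℕ}

/- Two chords `{i, σ i}` and `{j, σ j}` intersect (interleave around the circle). -/
def crosses (D : ChordDiagram n) (i j : Fin (2 * n)) : Prop :=
  (min i (D.σ i) < min j (D.σ j) ∧ min j (D.σ j) < max i (D.σ i) ∧
    max i (D.σ i) < max j (D.σ j)) ∨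
  (min j (D.σ j) < min i (D.σ i) ∧ min i (D.σ i) < max j (D.σ j) ∧
    max j (D.σ j) < max i (D.σ i))

lemma crosses_sigma_left (D : ChordDiagram n) (i j : Fin (2 * n)) :
    D.crosses (D.σ i) j ↔ D.crosses i j := by
  unfold crosses
  rw [D.invol i, min_comm (D.σ i) i, max_comm (D.σ i) i]

lemma crosses_sigma_right (D : ChordDiagram n) (i j : Fin (2 * n)) :
    D.crosses i (D.σ j) ↔ D.crosses i j := by
  unfold crosses
  rw [D.invol j, min_comm (D.σ j) j, max_comm (D.σ j) j]

/- Points of the circle, identified when they are endpoints of the same chord;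
the quotient is the set of chords of the diagram. -/
def chordSetoid (D : ChordDiagram n) : Setoid (Fin (2 * n)) where
  r i j := i = j ∨ D.σ i = j
  iseqv := by
    constructor
    · exact fun i => Or.inl rfl
    · rintro i j (rfl | h)
      · exact Or.inl rfl
      · exact Or.inr (by rw [← h, D.invol])
    · rintro i j k (rfl | h) (rfl | h')
      · exact Or.inl rfl
      · exact Or.inr h'
      · exact Or.inr h
      · exact Or.inl (by rw [← h', ← h, D.invol])

/- The set of chords of a chord diagram. -/
def Chords (D : ChordDiagram n) : Type := Quotient D.chordSetoid

/- The intersection graph (circle graph) of a chord diagram: vertices are the chords,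
two chords being adjacent iff they intersect. -/
def interGraph (D : ChordDiagram n) : SimpleGraph D.Chords where
  Adj := Quotient.lift₂ D.crosses (by
    rintro a b a' b' (rfl | ha) (rfl | hb)
    · rfl
    · rw [← hb, crosses_sigma_right]
    · rw [← ha, crosses_sigma_left]
    · rw [← ha, ← hb, crosses_sigma_left, crosses_sigma_right])
  symm := by
    constructor
    rintro ⟨i⟩ ⟨j⟩ h
    exact Or.symm h
  loopless := by
    constructor
    rintro ⟨i⟩ (h | h) <;> exact absurd h.1 (lt_irrefl _)

/- Conjugation of a chord diagram by a permutation of the points. -/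
def conj (D : ChordDiagram n) (μ : Equiv.Perm (Fin (2 * n))) : ChordDiagram n where
  σ := μ * D.σ * μ⁻¹
  invol := by
    intro i
    simp [Equiv.Perm.mul_apply, D.invol]
  nofix := by
    intro i h
    apply D.nofix (μ⁻¹ i)
    have := congrArg (fun z => μ⁻¹ z) h
    simpa using this

end ChordDiagram

namespace ChordDiagram

/- Position of the point `x` relative to the reference point `a` on the circle of
`2n` points (cyclic distance from `a` to `x`). -/
def relPos (n a x : ℕ) : ℕ := (x + (2 * n - a)) % (2 * n)

/- The underlying point map (in coordinates relative to the start of the share) of the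
180-degree rotation of the share consisting of the two arcs `[0, p)` and `[r, r + s)`. -/
def rotFun (p r s x : ℕ) : ℕ :=
  if x < p then x + (r - p) + s
  else if x < r then x + s - p
  else if x < r + s then x - r
  else x

/- The underlying point map (in coordinates relative to the start of the share) of the
reflection of the share consisting of the two arcs `[0, p)` and `[r, r + s)`. -/
def reflFun (p r s x : ℕ) : ℕ :=
  if x < p then p - 1 - x
  else if r ≤ x ∧ x < r + s then r + (r + s - 1 - x)
  else x

/- `specAt n a f μ` says the permutation `μ` acts, in coordinates relative to the
point `a`, by the map `f`. -/
def specAt (n a : ℕ) (f : ℕ → ℕ) (μ : Equiv.Perm (Fin (2 * n))) : Prop :=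
  ∀ x : Fin (2 * n), ((μ x : Fin (2 * n)) : ℕ) = (a + f (relPos n a (x : ℕ))) % (2 * n)

/- Membership in the share consisting (in coordinates relative to `a`) of the two arcs
`[0, p)` and `[r, r + s)`. -/
def inShare (n a p r s : ℕ) (x : Fin (2 * n)) : Prop :=
  relPos n a (x : ℕ) < p ∨ (r ≤ relPos n a (x : ℕ) ∧ relPos n a (x : ℕ) < r + s)

/- `D'` is obtained from `D` by a mutation: a rotation or a reflection of a share of `D`
(a pair of arcs such that every chord with an endpoint on them has both endpoints on
them). -/
def IsMutation {n : ℕ} (D D' : ChordDiagram n) : Prop :=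
  ∃ (a p r s : ℕ) (μ : Equiv.Perm (Fin (2 * n))),
    a < 2 * n ∧ p ≤ r ∧ r + s ≤ 2 * n ∧
    (∀ i, inShare n a p r s i → inShare n a p r s (D.σ i)) ∧
    (specAt n a (rotFun p r s) μ ∨ specAt n a (reflFun p r s) μ) ∧
    D' = D.conj μ

end ChordDiagram


namespace ChordDiagram

variable {n : ℕ}

lemma relPos_spec {u v : ℕ} (hu : u < 2 * n) (hv : v < 2 * n) :
    relPos n u v < 2 * n ∧ (relPos n u v + u = v ∨ relPos n u v + u = v + 2 * n) := by
  unfold relPos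
  rcases le_or_gt u v with h | h
  · have e : v + (2 * n - u) = (v - u) + 2 * n := by omega
    rw [e, Nat.add_mod_right, Nat.mod_eq_of_lt (by omega)]
    omega
  · rw [Nat.mod_eq_of_lt (by omega)]
    omega

lemma relPos_round {a x : ℕ} (ha : a < 2 * n) (hx : x < 2 * n) :
    (a + relPos n a x) % (2 * n) = x := by
  obtain ⟨h1, h2⟩ := relPos_spec (n := n) ha hx
  rcases h2 with h2 | h2
  · rw [show a + relPos n a x = x by omega, Nat.mod_eq_of_lt hx]
  · rw [show a + relPos n a x = x + 2 * n by omega, Nat.add_mod_right, Nat.mod_eq_of_lt hx]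

lemma mod_add_spec {a α : ℕ} (ha : a < 2 * n) (hα : α < 2 * n) :
    (a + α) % (2 * n) < 2 * n ∧
      ((a + α) % (2 * n) = a + α ∨ (a + α) % (2 * n) + 2 * n = a + α) := by
  rcases lt_or_ge (a + α) (2 * n) with h | h
  · rw [Nat.mod_eq_of_lt h]; omega
  · rw [Nat.mod_eq_sub_mod h, Nat.mod_eq_of_lt (by omega)]; omega

lemma relPos_shift {a α β : ℕ} (ha : a < 2 * n) (hα : α < 2 * n) (hβ : β < 2 * n) :
    relPos n ((a + α) % (2 * n)) ((a + β) % (2 * n)) = relPos n α β := by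
  obtain ⟨hu, hu2⟩ := mod_add_spec (n := n) ha hα
  obtain ⟨hv, hv2⟩ := mod_add_spec (n := n) ha hβ
  obtain ⟨h1, h2⟩ := relPos_spec (n := n) hu hv
  obtain ⟨h3, h4⟩ := relPos_spec (n := n) hα hβ
  omega

/-- The xor/interleaving form of the crossing condition, relative to base point `w`. -/
def Xp (n w x y z : ℕ) : Prop :=
  ¬ (relPos n w y < relPos n w x ↔ relPos n w z < relPos n w x)

lemma cr_iff_X {w x y z : ℕ} (hw : w < 2 * n) (hx : x < 2 * n) (hy : y < 2 * n)
    (hz : z < 2 * n) (hwx : w ≠ x) (hyz : y ≠ z) (hwy : w ≠ y) (hwz : w ≠ z)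
    (hxy : x ≠ y) (hxz : x ≠ z) :
    ((min w x < min y z ∧ min y z < max w x ∧ max w x < max y z) ∨
      (min y z < min w x ∧ min w x < max y z ∧ max y z < max w x)) ↔ Xp n w x y z := by
  obtain ⟨a1, a2⟩ := relPos_spec (n := n) hw hy
  obtain ⟨b1, b2⟩ := relPos_spec (n := n) hw hx
  obtain ⟨c1, c2⟩ := relPos_spec (n := n) hw hz
  unfold Xp
  omega

lemma rot_spec {p r s u : ℕ} (hpr : p ≤ r) (hrs : r + s ≤ 2 * n) (hu : u < 2 * n) :
    (u < p ∧ rotFun p r s u + p = u + r + s) ∨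
    (p ≤ u ∧ u < r ∧ rotFun p r s u + p = u + s) ∨
    (r ≤ u ∧ u < r + s ∧ rotFun p r s u + r = u) ∨
    (r + s ≤ u ∧ rotFun p r s u = u) := by
  unfold rotFun
  split_ifs <;> omega

lemma refl_spec {p r s u : ℕ} (hpr : p ≤ r) (hrs : r + s ≤ 2 * n) (hu : u < 2 * n) :
    (u < p ∧ reflFun p r s u + u + 1 = p) ∨
    (r ≤ u ∧ u < r + s ∧ reflFun p r s u + u + 1 = 2 * r + s) ∨
    (p ≤ u ∧ (u < r ∨ r + s ≤ u) ∧ reflFun p r s u = u) := by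
  unfold reflFun
  split_ifs <;> omega

lemma rot_lt {p r s u : ℕ} (hpr : p ≤ r) (hrs : r + s ≤ 2 * n) (hu : u < 2 * n) :
    rotFun p r s u < 2 * n := by
  unfold rotFun; split_ifs <;> omega

lemma refl_lt {p r s u : ℕ} (hpr : p ≤ r) (hrs : r + s ≤ 2 * n) (hu : u < 2 * n) :
    reflFun p r s u < 2 * n := by
  unfold reflFun; split_ifs <;> omega

lemma sym1 {w x y z : ℕ} (hw : w < 2 * n) (hx : x < 2 * n) (hy : y < 2 * n)
    (hz : z < 2 * n) : Xp n w x y z ↔ Xp n x w y z := by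
  obtain ⟨a1, a2⟩ := relPos_spec (n := n) hw hy
  obtain ⟨b1, b2⟩ := relPos_spec (n := n) hw hx
  obtain ⟨c1, c2⟩ := relPos_spec (n := n) hw hz
  obtain ⟨a1', a2'⟩ := relPos_spec (n := n) hx hy
  obtain ⟨b1', b2'⟩ := relPos_spec (n := n) hx hw
  obtain ⟨c1', c2'⟩ := relPos_spec (n := n) hx hz
  unfold Xp
  omega

lemma sym2 {w x y z : ℕ} : Xp n w x y z ↔ Xp n w x z y := by
  unfold Xp; tauto

lemma sym3 {w x y z : ℕ} (hw : w < 2 * n) (hx : x < 2 * n) (hy : y < 2 * n)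
    (hz : z < 2 * n) (hwx : w ≠ x) (hyz : y ≠ z) (hwy : w ≠ y) (hwz : w ≠ z)
    (hxy : x ≠ y) (hxz : x ≠ z) : Xp n w x y z ↔ Xp n y z w x := by
  rw [← cr_iff_X hw hx hy hz hwx hyz hwy hwz hxy hxz,
    ← cr_iff_X hy hz hw hx hyz hwx (Ne.symm hwy) (Ne.symm hxy) (Ne.symm hwz)
      (Ne.symm hxz)]
  tauto

lemma rot_inj {p r s u v : ℕ} (hpr : p ≤ r) (hrs : r + s ≤ 2 * n) (hu : u < 2 * n)
    (hv : v < 2 * n) (huv : u ≠ v) : rotFun p r s u ≠ rotFun p r s v := by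
  have su := rot_spec (n := n) (u := u) hpr hrs hu
  have sv := rot_spec (n := n) (u := v) hpr hrs hv
  omega

lemma refl_inj {p r s u v : ℕ} (hpr : p ≤ r) (hrs : r + s ≤ 2 * n) (hu : u < 2 * n)
    (hv : v < 2 * n) (huv : u ≠ v) : reflFun p r s u ≠ reflFun p r s v := by
  have su := refl_spec (n := n) (u := u) hpr hrs hu
  have sv := refl_spec (n := n) (u := v) hpr hrs hv
  omega

set_option maxHeartbeats 12000000 in
lemma core_rot_aux {p r s w x y z : ℕ} (hpr : p ≤ r) (hrs : r + s ≤ 2 * n)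
    (hw : w < 2 * n) (hx : x < 2 * n) (hy : y < 2 * n) (hz : z < 2 * n)
    (hwx : w < x) (hyz : y < z) (hwy : w < y) (hxy : x ≠ y) (hxz : x ≠ z)
    (h1 : (w < p ∨ (r ≤ w ∧ w < r + s)) ↔ (x < p ∨ (r ≤ x ∧ x < r + s)))
    (h2 : (y < p ∨ (r ≤ y ∧ y < r + s)) ↔ (z < p ∨ (r ≤ z ∧ z < r + s))) :
    Xp n (rotFun p r s w) (rotFun p r s x) (rotFun p r s y) (rotFun p r s z) ↔
      Xp n w x y z := by
  have sw := rot_spec (n := n) (u := w) hpr hrs hw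
  have sx := rot_spec (n := n) (u := x) hpr hrs hx
  have sy := rot_spec (n := n) (u := y) hpr hrs hy
  have sz := rot_spec (n := n) (u := z) hpr hrs hz
  have bw := rot_lt (n := n) (u := w) hpr hrs hw
  have bx := rot_lt (n := n) (u := x) hpr hrs hx
  have by' := rot_lt (n := n) (u := y) hpr hrs hy
  have bz := rot_lt (n := n) (u := z) hpr hrs hz
  obtain ⟨a1, a2⟩ := relPos_spec (n := n) hw hy
  obtain ⟨b1, b2⟩ := relPos_spec (n := n) hw hx
  obtain ⟨c1, c2⟩ := relPos_spec (n := n) hw hz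
  obtain ⟨a1', a2'⟩ := relPos_spec (n := n) bw by'
  obtain ⟨b1', b2'⟩ := relPos_spec (n := n) bw bx
  obtain ⟨c1', c2'⟩ := relPos_spec (n := n) bw bz
  unfold Xp
  rcases sw with hw1|hw1|hw1|hw1 <;> rcases sx with hx1|hx1|hx1|hx1 <;>
    rcases sy with hy1|hy1|hy1|hy1 <;> rcases sz with hz1|hz1|hz1|hz1 <;> omega

set_option maxHeartbeats 12000000 in
lemma core_refl_aux {p r s w x y z : ℕ} (hpr : p ≤ r) (hrs : r + s ≤ 2 * n)
    (hw : w < 2 * n) (hx : x < 2 * n) (hy : y < 2 * n) (hz : z < 2 * n)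
    (hwx : w < x) (hyz : y < z) (hwy : w < y) (hxy : x ≠ y) (hxz : x ≠ z)
    (h1 : (w < p ∨ (r ≤ w ∧ w < r + s)) ↔ (x < p ∨ (r ≤ x ∧ x < r + s)))
    (h2 : (y < p ∨ (r ≤ y ∧ y < r + s)) ↔ (z < p ∨ (r ≤ z ∧ z < r + s))) :
    Xp n (reflFun p r s w) (reflFun p r s x) (reflFun p r s y) (reflFun p r s z) ↔
      Xp n w x y z := by
  have sw := refl_spec (n := n) (u := w) hpr hrs hw
  have sx := refl_spec (n := n) (u := x) hpr hrs hx
  have sy := refl_spec (n := n) (u := y) hpr hrs hy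
  have sz := refl_spec (n := n) (u := z) hpr hrs hz
  have bw := refl_lt (n := n) (u := w) hpr hrs hw
  have bx := refl_lt (n := n) (u := x) hpr hrs hx
  have by' := refl_lt (n := n) (u := y) hpr hrs hy
  have bz := refl_lt (n := n) (u := z) hpr hrs hz
  obtain ⟨a1, a2⟩ := relPos_spec (n := n) hw hy
  obtain ⟨b1, b2⟩ := relPos_spec (n := n) hw hx
  obtain ⟨c1, c2⟩ := relPos_spec (n := n) hw hz
  obtain ⟨a1', a2'⟩ := relPos_spec (n := n) bw by'
  obtain ⟨b1', b2'⟩ := relPos_spec (n := n) bw bx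
  obtain ⟨c1', c2'⟩ := relPos_spec (n := n) bw bz
  unfold Xp
  rcases sw with hw1|hw1|hw1 <;> rcases sx with hx1|hx1|hx1 <;>
    rcases sy with hy1|hy1|hy1 <;> rcases sz with hz1|hz1|hz1 <;> omega

lemma core_full {p r s : ℕ} {f : ℕ → ℕ}
    (hlt : ∀ u, u < 2 * n → f u < 2 * n)
    (hinj : ∀ u v, u < 2 * n → v < 2 * n → u ≠ v → f u ≠ f v)
    (haux : ∀ w x y z : ℕ, w < 2 * n → x < 2 * n → y < 2 * n → z < 2 * n →
      w < x → y < z → w < y → x ≠ y → x ≠ z →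
      ((w < p ∨ (r ≤ w ∧ w < r + s)) ↔ (x < p ∨ (r ≤ x ∧ x < r + s))) →
      ((y < p ∨ (r ≤ y ∧ y < r + s)) ↔ (z < p ∨ (r ≤ z ∧ z < r + s))) →
      (Xp n (f w) (f x) (f y) (f z) ↔ Xp n w x y z))
    {w x y z : ℕ} (hw : w < 2 * n) (hx : x < 2 * n) (hy : y < 2 * n) (hz : z < 2 * n)
    (hwx : w ≠ x) (hyz : y ≠ z) (hwy : w ≠ y) (hwz : w ≠ z) (hxy : x ≠ y) (hxz : x ≠ z)
    (h1 : (w < p ∨ (r ≤ w ∧ w < r + s)) ↔ (x < p ∨ (r ≤ x ∧ x < r + s)))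
    (h2 : (y < p ∨ (r ≤ y ∧ y < r + s)) ↔ (z < p ∨ (r ≤ z ∧ z < r + s))) :
    Xp n (f w) (f x) (f y) (f z) ↔ Xp n w x y z := by
  have main : ∀ w x y z : ℕ, w < 2 * n → x < 2 * n → y < 2 * n → z < 2 * n →
      w < x → y < z → w ≠ y → w ≠ z → x ≠ y → x ≠ z →
      ((w < p ∨ (r ≤ w ∧ w < r + s)) ↔ (x < p ∨ (r ≤ x ∧ x < r + s))) →
      ((y < p ∨ (r ≤ y ∧ y < r + s)) ↔ (z < p ∨ (r ≤ z ∧ z < r + s))) →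
      (Xp n (f w) (f x) (f y) (f z) ↔ Xp n w x y z) := by
    intro w x y z hw hx hy hz hwx hyz hwy hwz hxy hxz h1 h2
    rcases lt_or_gt_of_ne hwy with h | h
    · exact haux w x y z hw hx hy hz hwx hyz h hxy hxz h1 h2
    · rw [sym3 (hlt w hw) (hlt x hx) (hlt y hy) (hlt z hz)
        (hinj w x hw hx hwx.ne) (hinj y z hy hz hyz.ne) (hinj w y hw hy hwy)
        (hinj w z hw hz hwz) (hinj x y hx hy hxy) (hinj x z hx hz hxz),
        sym3 hw hx hy hz hwx.ne hyz.ne hwy hwz hxy hxz]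
      exact haux y z w x hy hz hw hx hyz hwx h (Ne.symm hwz) (Ne.symm hxz) h2 h1
  rcases lt_or_gt_of_ne hwx with o1 | o1 <;> rcases lt_or_gt_of_ne hyz with o2 | o2
  · exact main w x y z hw hx hy hz o1 o2 hwy hwz hxy hxz h1 h2
  · rw [sym2 (n := n) (w := f w) (x := f x) (y := f y) (z := f z),
      sym2 (n := n) (w := w) (x := x) (y := y) (z := z)]
    exact main w x z y hw hx hz hy o1 o2 hwz hwy hxz hxy h1 h2.symm
  · rw [sym1 (hlt w hw) (hlt x hx) (hlt y hy) (hlt z hz), sym1 hw hx hy hz]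
    exact main x w y z hx hw hy hz o1 o2 hxy hxz hwy hwz h1.symm h2
  · rw [sym1 (hlt w hw) (hlt x hx) (hlt y hy) (hlt z hz), sym1 hw hx hy hz,
      sym2 (n := n) (w := f x) (x := f w) (y := f y) (z := f z),
      sym2 (n := n) (w := x) (x := w) (y := y) (z := z)]
    exact main x w z y hx hw hz hy o1 o2 hxz hxy hwz hwy h1.symm h2.symm

lemma conj_sigma_apply (D : ChordDiagram n) (μ : Equiv.Perm (Fin (2 * n)))
    (i : Fin (2 * n)) : (D.conj μ).σ (μ i) = μ (D.σ i) := by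
  simp [conj, Equiv.Perm.mul_apply]

lemma crosses_same (D : ChordDiagram n) {i j : Fin (2 * n)} (h : j = i ∨ j = D.σ i) :
    ¬ D.crosses i j := by
  rcases h with rfl | rfl
  · rintro (⟨h1, -⟩ | ⟨h1, -⟩) <;> exact lt_irrefl _ h1
  · rw [crosses_sigma_right]
    rintro (⟨h1, -⟩ | ⟨h1, -⟩) <;> exact lt_irrefl _ h1

lemma crosses_nat (D : ChordDiagram n) (i j : Fin (2 * n)) :
    D.crosses i j ↔
      ((min (i : ℕ) (D.σ i : ℕ) < min (j : ℕ) (D.σ j : ℕ) ∧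
        min (j : ℕ) (D.σ j : ℕ) < max (i : ℕ) (D.σ i : ℕ) ∧
        max (i : ℕ) (D.σ i : ℕ) < max (j : ℕ) (D.σ j : ℕ)) ∨
      (min (j : ℕ) (D.σ j : ℕ) < min (i : ℕ) (D.σ i : ℕ) ∧
        min (i : ℕ) (D.σ i : ℕ) < max (j : ℕ) (D.σ j : ℕ) ∧
        max (j : ℕ) (D.σ j : ℕ) < max (i : ℕ) (D.σ i : ℕ))) := by
  unfold crosses
  rfl

lemma crosses_conj (D : ChordDiagram n) {a p r s : ℕ} {μ : Equiv.Perm (Fin (2 * n))}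
    {f : ℕ → ℕ} (ha : a < 2 * n) (hpr : p ≤ r) (hrs : r + s ≤ 2 * n)
    (hcl : ∀ i, inShare n a p r s i → inShare n a p r s (D.σ i))
    (hspec : specAt n a f μ)
    (hlt : ∀ u, u < 2 * n → f u < 2 * n)
    (hcore : ∀ w x y z : ℕ, w < 2 * n → x < 2 * n → y < 2 * n → z < 2 * n →
      w ≠ x → y ≠ z → w ≠ y → w ≠ z → x ≠ y → x ≠ z →
      ((w < p ∨ (r ≤ w ∧ w < r + s)) ↔ (x < p ∨ (r ≤ x ∧ x < r + s))) →
      ((y < p ∨ (r ≤ y ∧ y < r + s)) ↔ (z < p ∨ (r ≤ z ∧ z < r + s))) →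
      (Xp n (f w) (f x) (f y) (f z) ↔ Xp n w x y z))
    (i j : Fin (2 * n)) :
    (D.conj μ).crosses (μ i) (μ j) ↔ D.crosses i j := by
  by_cases hji : j = i ∨ j = D.σ i
  · constructor
    · intro hcr
      exfalso
      refine (D.conj μ).crosses_same (i := μ i) (j := μ j) ?_ hcr
      rcases hji with rfl | rfl
      · exact Or.inl rfl
      · exact Or.inr (conj_sigma_apply D μ i).symm
    · intro hcr
      exact absurd hcr (D.crosses_same hji)
  · push_neg at hji
    obtain ⟨hji1, hji2⟩ := hji
    -- pairwise distinctness of the four endpoints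
    have d1 : i ≠ D.σ i := fun h => D.nofix i h.symm
    have d2 : j ≠ D.σ j := fun h => D.nofix j h.symm
    have d3 : i ≠ j := fun h => hji1 h.symm
    have d4 : i ≠ D.σ j := by
      intro h
      apply hji2
      rw [h, D.invol]
    have d5 : D.σ i ≠ j := by
      intro h
      exact hji2 h.symm
    have d6 : D.σ i ≠ D.σ j := fun h => d3 (D.σ.injective h)
    have vne : ∀ {u v : Fin (2 * n)}, u ≠ v → (u : ℕ) ≠ (v : ℕ) :=
      fun h hv => h (Fin.val_injective hv)
    -- coordinates relative to a
    set w := relPos n a (i : ℕ) with hw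
    set x := relPos n a (D.σ i : ℕ) with hx
    set y := relPos n a (j : ℕ) with hy
    set z := relPos n a (D.σ j : ℕ) with hz
    have bw : w < 2 * n := (relPos_spec (n := n) ha i.isLt).1
    have bx : x < 2 * n := (relPos_spec (n := n) ha (D.σ i).isLt).1
    have by' : y < 2 * n := (relPos_spec (n := n) ha j.isLt).1
    have bz : z < 2 * n := (relPos_spec (n := n) ha (D.σ j).isLt).1
    have rw_i : (a + w) % (2 * n) = (i : ℕ) := relPos_round ha i.isLt
    have rw_x : (a + x) % (2 * n) = ((D.σ i : Fin (2 * n)) : ℕ) := relPos_round ha (D.σ i).isLt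
    have rw_y : (a + y) % (2 * n) = (j : ℕ) := relPos_round ha j.isLt
    have rw_z : (a + z) % (2 * n) = ((D.σ j : Fin (2 * n)) : ℕ) := relPos_round ha (D.σ j).isLt
    -- distinctness in relative coordinates
    have rinj : ∀ {u v : Fin (2 * n)}, u ≠ v →
        relPos n a (u : ℕ) ≠ relPos n a (v : ℕ) := by
      intro u v huv he
      apply vne huv
      rw [← relPos_round (n := n) ha u.isLt, ← relPos_round (n := n) ha v.isLt, he]
    -- share conditions
    have hshare : ∀ u : Fin (2 * n),
        ((relPos n a (u : ℕ) < p ∨ (r ≤ relPos n a (u : ℕ) ∧ relPos n a (u : ℕ) < r + s)) ↔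
         (relPos n a ((D.σ u : Fin (2 * n)) : ℕ) < p ∨
           (r ≤ relPos n a ((D.σ u : Fin (2 * n)) : ℕ) ∧
             relPos n a ((D.σ u : Fin (2 * n)) : ℕ) < r + s))) := by
      intro u
      constructor
      · intro hu
        exact hcl u hu
      · intro hu
        have := hcl (D.σ u) hu
        rwa [D.invol] at this
    -- relPos between original points equals relPos in relative coordinates
    have e1 : relPos n (i : ℕ) (j : ℕ) = relPos n w y := by
      rw [← rw_i, ← rw_y]; exact relPos_shift ha bw by'
    have e2 : relPos n (i : ℕ) ((D.σ i : Fin (2 * n)) : ℕ) = relPos n w x := by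
      rw [← rw_i, ← rw_x]; exact relPos_shift ha bw bx
    have e3 : relPos n (i : ℕ) ((D.σ j : Fin (2 * n)) : ℕ) = relPos n w z := by
      rw [← rw_i, ← rw_z]; exact relPos_shift ha bw bz
    -- relPos between image points equals relPos of f-values
    have m1 : relPos n ((μ i : Fin (2 * n)) : ℕ) ((μ j : Fin (2 * n)) : ℕ) =
        relPos n (f w) (f y) := by
      rw [hspec i, hspec j, ← hw, ← hy]
      exact relPos_shift ha (hlt w bw) (hlt y by')
    have m2 : relPos n ((μ i : Fin (2 * n)) : ℕ) ((μ (D.σ i) : Fin (2 * n)) : ℕ) =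
        relPos n (f w) (f x) := by
      rw [hspec i, hspec (D.σ i), ← hw, ← hx]
      exact relPos_shift ha (hlt w bw) (hlt x bx)
    have m3 : relPos n ((μ i : Fin (2 * n)) : ℕ) ((μ (D.σ j) : Fin (2 * n)) : ℕ) =
        relPos n (f w) (f z) := by
      rw [hspec i, hspec (D.σ j), ← hw, ← hz]
      exact relPos_shift ha (hlt w bw) (hlt z bz)
    -- the chain of equivalences
    have step1 : D.crosses i j ↔ Xp n w x y z := by
      rw [crosses_nat]
      have := cr_iff_X (n := n) i.isLt (D.σ i).isLt j.isLt (D.σ j).isLt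
        (vne d1) (vne d2) (vne d3) (vne d4) (vne d5).symm.symm (vne d6)
      rw [this]
      unfold Xp
      rw [e1, e2, e3]
    have step2 : (D.conj μ).crosses (μ i) (μ j) ↔ Xp n (f w) (f x) (f y) (f z) := by
      rw [crosses_nat, conj_sigma_apply, conj_sigma_apply]
      have dm : ∀ {u v : Fin (2 * n)}, u ≠ v → ((μ u : Fin (2 * n)) : ℕ) ≠ (μ v : ℕ) :=
        fun h => vne (fun hv => h (μ.injective hv))
      have := cr_iff_X (n := n) (μ i).isLt (μ (D.σ i)).isLt (μ j).isLt (μ (D.σ j)).isLt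
        (dm d1) (dm d2) (dm d3) (dm d4) (dm d5) (dm d6)
      rw [this]
      unfold Xp
      rw [m1, m2, m3]
    rw [step1, step2]
    exact hcore w x y z bw bx by' bz (rinj d1) (rinj d2) (rinj d3) (rinj d4) (rinj d5)
      (rinj d6) (hshare i) (hshare j)

end ChordDiagram

/-- A mutation of a chord diagram (rotation or reflection of a share)
preserves the intersection graph: the mutated diagram has an isomorphic intersection
graph. -/
theorem interGraph_iso_of_mutation {n : ℕ} (D D' : ChordDiagram n)
    (h : ChordDiagram.IsMutation D D') :
    Nonempty (D.interGraph ≃g D'.interGraph) := by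
  classical
  obtain ⟨a, p, r, s, μ, ha, hpr, hrs, hcl, hspec, hD'⟩ := h
  subst hD'
  have hσ : ∀ i j : Fin (2 * n),
      (D.chordSetoid.r i j) ↔ ((D.conj μ).chordSetoid.r (μ i) (μ j)) := by
    intro i j
    show (i = j ∨ D.σ i = j) ↔ (μ i = μ j ∨ (D.conj μ).σ (μ i) = μ j)
    rw [ChordDiagram.conj_sigma_apply]
    constructor
    · rintro (rfl | h)
      · exact Or.inl rfl
      · exact Or.inr (congrArg μ h)
    · rintro (h | h)
      · exact Or.inl (μ.injective h)
      · exact Or.inr (μ.injective h)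
  have key : ∀ i j : Fin (2 * n),
      (D.conj μ).crosses (μ i) (μ j) ↔ D.crosses i j := by
    rcases hspec with hs | hs
    · intro i j
      exact D.crosses_conj ha hpr hrs hcl hs
        (fun u hu => ChordDiagram.rot_lt hpr hrs hu)
        (fun w x y z bw bx by' bz d1 d2 d3 d4 d5 d6 h1 h2 =>
          ChordDiagram.core_full
            (fun u hu => ChordDiagram.rot_lt hpr hrs hu)
            (fun u v hu hv huv => ChordDiagram.rot_inj hpr hrs hu hv huv)
            (fun w x y z bw bx by' bz o1 o2 o3 d5 d6 h1 h2 =>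
              ChordDiagram.core_rot_aux hpr hrs bw bx by' bz o1 o2 o3 d5 d6 h1 h2)
            bw bx by' bz d1 d2 d3 d4 d5 d6 h1 h2) i j
    · intro i j
      exact D.crosses_conj ha hpr hrs hcl hs
        (fun u hu => ChordDiagram.refl_lt hpr hrs hu)
        (fun w x y z bw bx by' bz d1 d2 d3 d4 d5 d6 h1 h2 =>
          ChordDiagram.core_full
            (fun u hu => ChordDiagram.refl_lt hpr hrs hu)
            (fun u v hu hv huv => ChordDiagram.refl_inj hpr hrs hu hv huv)
            (fun w x y z bw bx by' bz o1 o2 o3 d5 d6 h1 h2 =>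
              ChordDiagram.core_refl_aux hpr hrs bw bx by' bz o1 o2 o3 d5 d6 h1 h2)
            bw bx by' bz d1 d2 d3 d4 d5 d6 h1 h2) i j
  refine ⟨{ toEquiv := Quotient.congr μ hσ, map_rel_iff' := ?_ }⟩
  rintro ⟨i⟩ ⟨j⟩
  exact key i j
end

section
/- The Whitney twist preserves the cycle matroid: if a graph G is obtained from disjoint graphs G₁, G₂ by identifying u₁ with u₂ and v₁ with v₂ (u₁,v₁ ∈ G₁, u₂,v₂ ∈ G₂), and G' is obtained by identifying u₁ with v₂ and v₁ with u₂, then G and G' have isomorphic cycle matroids (via the identity map on edges). -/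
/- The vertex map from `V₂` into the vertex set of the graph obtained by gluing `G₂` to
`G₁` along `u₂ ↦ α` and `v₂ ↦ β` (`α, β ∈ V₁`); the remaining vertices of `V₂` keep
their identity. -/
open Classical in
noncomputable def glueMap₂ {V₁ V₂ : Type} (u₂ v₂ : V₂) (α β : V₁) :
    V₂ → V₁ ⊕ {w : V₂ // w ≠ u₂ ∧ w ≠ v₂} := fun w =>
  if h : w = u₂ then .inl α
  else if h' : w = v₂ then .inl β
  else .inr ⟨w, ⟨h, h'⟩⟩

/- The inclusion of `V₁` into the glued vertex set. -/
def inclMap {V₁ V₂ : Type} (u₂ v₂ : V₂) :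
    V₁ → V₁ ⊕ {w : V₂ // w ≠ u₂ ∧ w ≠ v₂} := Sum.inl


open SimpleGraph

variable {W : Type} [DecidableEq W]
set_option linter.unusedSectionVars false
namespace WhitneyTwist



/-- Combined reachability relation for a union of two graphs glued along `{a, b}`. -/
def glueRel (A B : SimpleGraph W) (a b : W) (x y : W) : Prop :=
  A.Reachable x y ∨ B.Reachable x y ∨
    ∃ c d, (c = a ∨ c = b) ∧ (d = a ∨ d = b) ∧
      (A.Reachable x c ∨ B.Reachable x c) ∧ (A.Reachable d y ∨ B.Reachable d y) ∧
      (c = d ∨ A.Reachable a b ∨ B.Reachable a b)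

lemma reachable_mem_support_of_ne {G : SimpleGraph W} {x y : W}
    (h : G.Reachable x y) (hne : x ≠ y) : x ∈ G.support := by
  obtain ⟨w⟩ := h
  cases w with
  | nil => exact absurd rfl hne
  | cons h p => exact ⟨_, h⟩

lemma glueRel_swap {A B : SimpleGraph W} {a b x y : W}
    (h : glueRel A B a b x y) : glueRel B A a b x y := by
  rcases h with h | h | ⟨c, d, hc, hd, h1, h2, h3⟩
  · exact Or.inr (Or.inl h)
  · exact Or.inl h
  · refine Or.inr (Or.inr ⟨c, d, hc, hd, h1.symm, h2.symm, ?_⟩)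
    rcases h3 with h3 | h3 | h3
    exacts [Or.inl h3, Or.inr (Or.inr h3), Or.inr (Or.inl h3)]

lemma glueRel_cons {A B : SimpleGraph W} {a b : W}
    (hs : ∀ x, x ∈ A.support → x ∈ B.support → x = a ∨ x = b)
    {x x' y : W} (hadj : A.Adj x x') (h : glueRel A B a b x' y) :
    glueRel A B a b x y := by
  have hxr : A.Reachable x x' := hadj.reachable
  rcases h with h | h | ⟨c, d, hc, hd, h1, h2, h3⟩
  · exact Or.inl (hxr.trans h)
  · by_cases hxy : x' = y
    · subst hxy; exact Or.inl hxr
    · have hx' : x' = a ∨ x' = b :=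
        hs x' ⟨x, hadj.symm⟩ (reachable_mem_support_of_ne h hxy)
      exact Or.inr (Or.inr ⟨x', x', hx', hx', Or.inl hxr, Or.inr h, Or.inl rfl⟩)
  · rcases h1 with h1 | h1
    · exact Or.inr (Or.inr ⟨c, d, hc, hd, Or.inl (hxr.trans h1), h2, h3⟩)
    · by_cases hxc : x' = c
      · subst hxc
        exact Or.inr (Or.inr ⟨x', d, hc, hd, Or.inl hxr, h2, h3⟩)
      · have hx' : x' = a ∨ x' = b :=
          hs x' ⟨x, hadj.symm⟩ (reachable_mem_support_of_ne h1 hxc)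
        have hQ : B.Reachable a b := by
          rcases hx' with rfl | rfl <;> rcases hc with rfl | rfl
          · exact absurd rfl hxc
          · exact h1
          · exact h1.symm
          · exact absurd rfl hxc
        exact Or.inr (Or.inr ⟨x', d, hx', hd, Or.inl hxr, h2, Or.inr (Or.inr hQ)⟩)

lemma reachable_sup_glueRel {A B : SimpleGraph W} {a b : W}
    (hs : ∀ x, x ∈ A.support → x ∈ B.support → x = a ∨ x = b)
    {x y : W} (h : (A ⊔ B).Reachable x y) : glueRel A B a b x y := by
  obtain ⟨w⟩ := h
  induction w with
  | nil => exact Or.inl (Reachable.refl _)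
  | cons hadj p ih =>
    rcases (sup_adj _ _ _ _).mp hadj with hadj' | hadj'
    · exact glueRel_cons hs hadj' ih
    · exact glueRel_swap (glueRel_cons (fun z h1 h2 => hs z h2 h1) hadj' (glueRel_swap ih))

lemma glueRel_reachable {A B : SimpleGraph W} {a b x y : W}
    (h : glueRel A B a b x y) : (A ⊔ B).Reachable x y := by
  have mS : ∀ {p q : W}, (A.Reachable p q ∨ B.Reachable p q) → (A ⊔ B).Reachable p q := by
    rintro p q (h | h)
    exacts [h.mono le_sup_left, h.mono le_sup_right]
  rcases h with h | h | ⟨c, d, hc, hd, h1, h2, h3⟩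
  · exact mS (Or.inl h)
  · exact mS (Or.inr h)
  · have hcd : (A ⊔ B).Reachable c d := by
      rcases h3 with rfl | h3 | h3
      · exact Reachable.refl _
      all_goals {
        have hab : (A ⊔ B).Reachable a b := by
          first
            | exact (h3 : A.Reachable a b).mono le_sup_left
            | exact (h3 : B.Reachable a b).mono le_sup_right
        rcases hc with rfl | rfl <;> rcases hd with rfl | rfl
        exacts [Reachable.refl _, hab, hab.symm, Reachable.refl _] }
    exact (mS h1).trans (hcd.trans (mS h2))


lemma comap_reachable {G : SimpleGraph W} (σ : W ≃ W) {x y : W} :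
    (G.comap ⇑σ).Reachable x y ↔ G.Reachable (σ x) (σ y) := by
  constructor
  · intro h
    exact h.map ⟨⇑σ, fun h => h⟩
  · intro h
    have h2 := h.map (⟨⇑σ.symm, fun {u v} h => by simpa using h⟩ : G →g G.comap ⇑σ)
    have h3 : (G.comap ⇑σ).Reachable (σ.symm (σ x)) (σ.symm (σ y)) := h2
    simpa using h3

lemma mem_support_comap {G : SimpleGraph W} (σ : W ≃ W) {x : W} :
    x ∈ (G.comap ⇑σ).support ↔ σ x ∈ G.support := by
  simp only [mem_support, comap_adj]
  constructor
  · rintro ⟨w, h⟩; exact ⟨σ w, h⟩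
  · rintro ⟨w, h⟩; exact ⟨σ.symm w, by simpa using h⟩

lemma hs_comap {A B : SimpleGraph W} {a b : W}
    (hs : ∀ x, x ∈ A.support → x ∈ B.support → x = a ∨ x = b) :
    ∀ x, x ∈ A.support → x ∈ (B.comap ⇑(Equiv.swap a b)).support → x = a ∨ x = b := by
  intro x hA hB
  rw [mem_support_comap] at hB
  by_cases hxa : x = a
  · exact Or.inl hxa
  by_cases hxb : x = b
  · exact Or.inr hxb
  rw [Equiv.swap_apply_of_ne_of_ne hxa hxb] at hB
  exact hs x hA hB

/-- Key reachability transfer lemma. -/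
lemma reach_of_reach_comap {A B : SimpleGraph W} {a b : W}
    (hs : ∀ x, x ∈ A.support → x ∈ B.support → x = a ∨ x = b)
    {x y : W}
    (hx : x ∈ (B.comap ⇑(Equiv.swap a b)).support → x = a ∨ x = b)
    (hy : y ∈ (B.comap ⇑(Equiv.swap a b)).support → y = a ∨ y = b)
    (h : (A ⊔ B.comap ⇑(Equiv.swap a b)).Reachable x y) :
    (A ⊔ B).Reachable x y := by
  set σ := Equiv.swap a b with hσ
  set B₂ := B.comap ⇑σ with hB₂
  have hQ : B₂.Reachable a b ↔ B.Reachable a b := by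
    rw [comap_reachable, hσ, Equiv.swap_apply_left, Equiv.swap_apply_right, reachable_comm]
  have conv : ∀ {p q : W}, (p = a ∨ p = b) → (q = a ∨ q = b) →
      B₂.Reachable p q → B.Reachable p q := by
    rintro p q (rfl | rfl) (rfl | rfl) h
    · exact Reachable.refl _
    · exact hQ.mp h
    · exact (hQ.mp h.symm).symm
    · exact Reachable.refl _
  have hR : glueRel A B₂ a b x y := reachable_sup_glueRel (hs_comap hs) h
  apply glueRel_reachable (a := a) (b := b)
  rcases hR with h | h | ⟨c, d, hc, hd, h1, h2, h3⟩
  · exact Or.inl h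
  · by_cases hxy : x = y
    · subst hxy; exact Or.inl (Reachable.refl _)
    · have hxab := hx (reachable_mem_support_of_ne h hxy)
      have hyab := hy (reachable_mem_support_of_ne h.symm (Ne.symm hxy))
      exact Or.inr (Or.inl (conv hxab hyab h))
  · refine Or.inr (Or.inr ⟨c, d, hc, hd, ?_, ?_, ?_⟩)
    · rcases h1 with h1 | h1
      · exact Or.inl h1
      · by_cases hxc : x = c
        · subst hxc; exact Or.inl (Reachable.refl _)
        · have hxab := hx (reachable_mem_support_of_ne h1 hxc)
          exact Or.inr (conv hxab hc h1)
    · rcases h2 with h2 | h2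
      · exact Or.inl h2
      · by_cases hdy : d = y
        · subst hdy; exact Or.inl (Reachable.refl _)
        · have hyab := hy (reachable_mem_support_of_ne h2.symm (Ne.symm hdy))
          exact Or.inr (conv hd hyab h2)
    · rcases h3 with h3 | h3 | h3
      · exact Or.inl h3
      · exact Or.inr (Or.inl h3)
      · exact Or.inr (Or.inr (hQ.mp h3))

lemma sdiff_sup_distrib (A B D : SimpleGraph W) : (A ⊔ B) \ D = (A \ D) ⊔ (B \ D) := by
  ext p q
  simp only [sdiff_adj, sup_adj]
  tauto

lemma comap_sup (A B : SimpleGraph W) (f : W → W) :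
    (A ⊔ B).comap f = A.comap f ⊔ B.comap f := by
  ext p q
  simp [comap_adj]

lemma comap_swap_swap (G : SimpleGraph W) (a b : W) :
    (G.comap ⇑(Equiv.swap a b)).comap ⇑(Equiv.swap a b) = G := by
  ext p q
  simp [comap_adj, Equiv.swap_apply_self]

lemma sdiff_fromEdgeSet_not_mem {G : SimpleGraph W} {e : Sym2 W} (h : e ∉ G.edgeSet) :
    G \ SimpleGraph.fromEdgeSet {e} = G := by
  ext p q
  simp only [sdiff_adj, fromEdgeSet_adj, Set.mem_singleton_iff]
  constructor
  · exact fun h => h.1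
  · intro hadj
    refine ⟨hadj, fun hc => ?_⟩
    exact h (hc.1 ▸ hadj)

lemma comap_sdiff_fromEdgeSet (B : SimpleGraph W) (σ : W ≃ W) (e : Sym2 W) :
    B.comap ⇑σ \ SimpleGraph.fromEdgeSet {e} =
      (B \ SimpleGraph.fromEdgeSet {Sym2.map ⇑σ e}).comap ⇑σ := by
  ext p q
  simp only [sdiff_adj, comap_adj, fromEdgeSet_adj, Set.mem_singleton_iff]
  have h1 : s(σ p, σ q) = Sym2.map ⇑σ e ↔ s(p, q) = e := by
    rw [← Sym2.map_pair_eq]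
    exact (Sym2.map.injective σ.injective).eq_iff
  have h2 : σ p ≠ σ q ↔ p ≠ q := σ.injective.ne_iff
  rw [h1, h2]

lemma main_step {A B : SimpleGraph W} {a b : W}
    (hs : ∀ x, x ∈ A.support → x ∈ B.support → x = a ∨ x = b)
    (hac : (A ⊔ B).IsAcyclic) :
    (A ⊔ B.comap ⇑(Equiv.swap a b)).IsAcyclic := by
  set σ := Equiv.swap a b with hσdef
  rw [isAcyclic_iff_forall_edge_isBridge]
  intro e he
  induction e using Sym2.ind with
  | _ x y =>
  rw [mem_edgeSet, sup_adj] at he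
  rw [isBridge_iff]
  intro hre
  rw [deleteEdges, sdiff_sup_distrib, comap_sdiff_fromEdgeSet] at hre
  -- keys about σ fixing points outside {a,b}
  have hfix : ∀ {z : W}, z ≠ a → z ≠ b → σ z = z := fun hza hzb =>
    Equiv.swap_apply_of_ne_of_ne hza hzb
  have hswap_edge : ∀ {p q : W}, p ≠ q → (p = a ∨ p = b) → (q = a ∨ q = b) →
      Sym2.map ⇑σ s(p, q) = s(p, q) := by
    rintro p q hpq (rfl | rfl) (rfl | rfl)
    · exact absurd rfl hpq
    · rw [Sym2.map_pair_eq, hσdef]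
      rw [Equiv.swap_apply_left, Equiv.swap_apply_right, Sym2.eq_swap]
    · rw [Sym2.map_pair_eq, hσdef]
      rw [Equiv.swap_apply_left, Equiv.swap_apply_right, Sym2.eq_swap]
    · exact absurd rfl hpq
  have hbr := isAcyclic_iff_forall_edge_isBridge.mp hac
  rcases he with hA | hB
  · -- e is an edge of A
    have hxA : x ∈ A.support := ⟨y, hA⟩
    have hyA : y ∈ A.support := ⟨x, hA.symm⟩
    have hmemAB : ∀ {z : W}, z ∈ A.support → σ z ∈ B.support → z = a ∨ z = b := by
      intro z hzA hzB
      by_cases hza : z = a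
      · exact Or.inl hza
      by_cases hzb : z = b
      · exact Or.inr hzb
      rw [hfix hza hzb] at hzB
      exact hs z hzA hzB
    -- transfer reachability
    have hre2 : ((A \ SimpleGraph.fromEdgeSet {s(x, y)}) ⊔
        (B \ SimpleGraph.fromEdgeSet {Sym2.map ⇑σ s(x, y)})).Reachable x y := by
      refine reach_of_reach_comap (fun z h1 h2 => ?_) ?_ ?_ hre
      · exact hs z (support_mono sdiff_le h1) (support_mono sdiff_le h2)
      · intro hmem
        rw [mem_support_comap] at hmem
        exact hmemAB hxA (support_mono sdiff_le hmem)
      · intro hmem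
        rw [mem_support_comap] at hmem
        exact hmemAB hyA (support_mono sdiff_le hmem)
    have heq : B \ SimpleGraph.fromEdgeSet {Sym2.map ⇑σ s(x, y)} =
        B \ SimpleGraph.fromEdgeSet {s(x, y)} := by
      by_cases hfixe : Sym2.map ⇑σ s(x, y) = s(x, y)
      · rw [hfixe]
      · have h1 : s(x, y) ∉ B.edgeSet := by
          intro hmem
          rw [mem_edgeSet] at hmem
          exact hfixe (hswap_edge hA.ne (hs x hxA ⟨y, hmem⟩) (hs y hyA ⟨x, hmem.symm⟩))
        have h2 : Sym2.map ⇑σ s(x, y) ∉ B.edgeSet := by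
          rw [Sym2.map_pair_eq, mem_edgeSet]
          intro hmem
          have hxab := hmemAB hxA ⟨σ y, hmem⟩
          have hyab := hmemAB hyA ⟨σ x, hmem.symm⟩
          exact hfixe (hswap_edge hA.ne hxab hyab)
        rw [sdiff_fromEdgeSet_not_mem h1, sdiff_fromEdgeSet_not_mem h2]
    rw [heq] at hre2
    have hbre := hbr (show s(x, y) ∈ (A ⊔ B).edgeSet by
      rw [mem_edgeSet, sup_adj]; exact Or.inl hA)
    rw [isBridge_iff] at hbre
    exact hbre (by rwa [deleteEdges, sdiff_sup_distrib])
  · -- e is (the σ-image of) an edge of B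
    rw [comap_adj] at hB
    have hxB : σ x ∈ B.support := ⟨σ y, hB⟩
    have hyB : σ y ∈ B.support := ⟨σ x, hB.symm⟩
    have hmemBA : ∀ {z : W}, σ z ∈ B.support → z ∈ A.support → σ z = a ∨ σ z = b := by
      intro z hzB hzA
      by_cases hza : z = a
      · subst hza; rw [hσdef, Equiv.swap_apply_left]; exact Or.inr rfl
      by_cases hzb : z = b
      · subst hzb; rw [hσdef, Equiv.swap_apply_right]; exact Or.inl rfl
      rw [hfix hza hzb] at hzB ⊢
      exact hs z hzA hzB
    -- conjugate the whole reachability statement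
    have hre2 : ((B \ SimpleGraph.fromEdgeSet {Sym2.map ⇑σ s(x, y)}) ⊔
        ((A \ SimpleGraph.fromEdgeSet {s(x, y)}).comap ⇑σ)).Reachable (σ x) (σ y) := by
      have h0 := (comap_reachable (G := (A \ SimpleGraph.fromEdgeSet {s(x, y)}) ⊔
          (B \ SimpleGraph.fromEdgeSet {Sym2.map ⇑σ s(x, y)}).comap ⇑σ) σ
          (x := σ x) (y := σ y)).mpr
      rw [Equiv.swap_apply_self, Equiv.swap_apply_self] at h0
      have h1 := h0 hre
      rwa [comap_sup, comap_swap_swap, sup_comm] at h1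
    have hre3 : ((B \ SimpleGraph.fromEdgeSet {Sym2.map ⇑σ s(x, y)}) ⊔
        (A \ SimpleGraph.fromEdgeSet {s(x, y)})).Reachable (σ x) (σ y) := by
      refine reach_of_reach_comap (fun z h1 h2 => ?_) ?_ ?_ hre2
      · rcases hs z (support_mono sdiff_le h2) (support_mono sdiff_le h1) with h | h
        exacts [Or.inl h, Or.inr h]
      · intro hmem
        rw [mem_support_comap] at hmem
        have : σ (σ x) ∈ A.support := support_mono sdiff_le hmem
        rw [Equiv.swap_apply_self] at this
        exact hmemBA hxB this
      · intro hmem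
        rw [mem_support_comap] at hmem
        have : σ (σ y) ∈ A.support := support_mono sdiff_le hmem
        rw [Equiv.swap_apply_self] at this
        exact hmemBA hyB this
    have heq : A \ SimpleGraph.fromEdgeSet {s(x, y)} =
        A \ SimpleGraph.fromEdgeSet {Sym2.map ⇑σ s(x, y)} := by
      by_cases hfixe : Sym2.map ⇑σ s(x, y) = s(x, y)
      · rw [hfixe]
      · have h1 : s(x, y) ∉ A.edgeSet := by
          intro hmem
          rw [mem_edgeSet] at hmem
          have hxab : x = a ∨ x = b := by
            by_cases hxa : x = a
            · exact Or.inl hxa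
            by_cases hxb : x = b
            · exact Or.inr hxb
            refine (hs x ⟨y, hmem⟩ ?_)
            rwa [← hfix hxa hxb]
          have hyab : y = a ∨ y = b := by
            by_cases hya : y = a
            · exact Or.inl hya
            by_cases hyb : y = b
            · exact Or.inr hyb
            refine (hs y ⟨x, hmem.symm⟩ ?_)
            rwa [← hfix hya hyb]
          exact hfixe (hswap_edge hmem.ne hxab hyab)
        have h2 : Sym2.map ⇑σ s(x, y) ∉ A.edgeSet := by
          rw [Sym2.map_pair_eq, mem_edgeSet]
          intro hmem
          have hxab := hs _ ⟨σ y, hmem⟩ hxB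
          have hyab := hs _ ⟨σ x, hmem.symm⟩ hyB
          have hkey : Sym2.map ⇑σ s(σ x, σ y) = s(σ x, σ y) := hswap_edge hmem.ne hxab hyab
          rw [Sym2.map_pair_eq, Equiv.swap_apply_self, Equiv.swap_apply_self] at hkey
          apply hfixe
          rw [Sym2.map_pair_eq]
          exact hkey.symm
        rw [sdiff_fromEdgeSet_not_mem h1, sdiff_fromEdgeSet_not_mem h2]
    rw [heq, sup_comm] at hre3
    have hbre := hbr (show Sym2.map ⇑σ s(x, y) ∈ (A ⊔ B).edgeSet by
      rw [Sym2.map_pair_eq, mem_edgeSet, sup_adj]; exact Or.inr hB)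
    rw [Sym2.map_pair_eq, isBridge_iff] at hbre
    refine hbre ?_
    rw [deleteEdges, sdiff_sup_distrib]
    have : SimpleGraph.fromEdgeSet {s(σ x, σ y)} =
        SimpleGraph.fromEdgeSet {Sym2.map ⇑σ s(x, y)} := by rw [Sym2.map_pair_eq]
    rw [this]
    exact hre3

end WhitneyTwist

namespace WhitneyTwist
variable {W : Type} [DecidableEq W]

lemma main_iff {A B : SimpleGraph W} {a b : W}
    (hs : ∀ x, x ∈ A.support → x ∈ B.support → x = a ∨ x = b) :
    (A ⊔ B).IsAcyclic ↔ (A ⊔ B.comap ⇑(Equiv.swap a b)).IsAcyclic := by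
  constructor
  · exact main_step hs
  · intro h
    have := main_step (hs_comap hs) h
    rwa [comap_swap_swap] at this

end WhitneyTwist

/-- The Whitney twist preserves the cycle matroid.  Let `G` be
obtained from disjoint graphs `G₁`, `G₂` by identifying `u₁` with `u₂` and `v₁` with
`v₂`, and `G'` by identifying `u₁` with `v₂` and `v₁` with `u₂`.  Then, under the
identity identification of the edges (each edge coming from an edge of `G₁` or of
`G₂`), a set of edges is independent (acyclic) in `G` iff it is in `G'`: the two cycle
matroids are isomorphic via the identity map on edges. -/
theorem whitney_twist_cycle_matroid {V₁ V₂ : Type}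
    (G₁ : SimpleGraph V₁) (G₂ : SimpleGraph V₂)
    (u₁ v₁ : V₁) (u₂ v₂ : V₂) (h₁ : u₁ ≠ v₁) (h₂ : u₂ ≠ v₂)
    (S₁ : Set (Sym2 V₁)) (hS₁ : S₁ ⊆ G₁.edgeSet)
    (S₂ : Set (Sym2 V₂)) (hS₂ : S₂ ⊆ G₂.edgeSet) :
    (SimpleGraph.fromEdgeSet
        (Sym2.map (inclMap u₂ v₂) '' S₁ ∪ Sym2.map (glueMap₂ u₂ v₂ u₁ v₁) '' S₂)).IsAcyclic ↔
    (SimpleGraph.fromEdgeSet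
        (Sym2.map (inclMap u₂ v₂) '' S₁ ∪ Sym2.map (glueMap₂ u₂ v₂ v₁ u₁) '' S₂)).IsAcyclic := by
  classical
  set a : V₁ ⊕ {w : V₂ // w ≠ u₂ ∧ w ≠ v₂} := Sum.inl u₁ with ha
  set b : V₁ ⊕ {w : V₂ // w ≠ u₂ ∧ w ≠ v₂} := Sum.inl v₁ with hb
  set σ := Equiv.swap a b with hσ
  set A := SimpleGraph.fromEdgeSet (Sym2.map (inclMap u₂ v₂) '' S₁) with hA
  set B := SimpleGraph.fromEdgeSet (Sym2.map (glueMap₂ u₂ v₂ u₁ v₁) '' S₂) with hB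
  have hinv : ∀ z : Sym2 (V₁ ⊕ {w : V₂ // w ≠ u₂ ∧ w ≠ v₂}),
      Sym2.map ⇑σ (Sym2.map ⇑σ z) = z := by
    intro z
    induction z using Sym2.ind with
    | _ u v =>
      rw [Sym2.map_pair_eq, Sym2.map_pair_eq, hσ, Equiv.swap_apply_self, Equiv.swap_apply_self]
  have hg' : glueMap₂ u₂ v₂ v₁ u₁ = ⇑σ ∘ glueMap₂ u₂ v₂ u₁ v₁ := by
    funext w
    simp only [glueMap₂, Function.comp_apply]
    split_ifs with h h'
    · rw [hσ, ha, hb, Equiv.swap_apply_left]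
    · rw [hσ, ha, hb, Equiv.swap_apply_right]
    · refine (Equiv.swap_apply_of_ne_of_ne ?_ ?_).symm <;> simp [ha, hb]
  have hB' : SimpleGraph.fromEdgeSet (Sym2.map (glueMap₂ u₂ v₂ v₁ u₁) '' S₂) =
      B.comap ⇑σ := by
    ext p q
    simp only [SimpleGraph.fromEdgeSet_adj, SimpleGraph.comap_adj, hB]
    have himg : s(p, q) ∈ Sym2.map (glueMap₂ u₂ v₂ v₁ u₁) '' S₂ ↔
        s(σ p, σ q) ∈ Sym2.map (glueMap₂ u₂ v₂ u₁ v₁) '' S₂ := by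
      rw [hg']
      constructor
      · rintro ⟨t, ht, hmap⟩
        refine ⟨t, ht, ?_⟩
        rw [← Sym2.map_map] at hmap
        have := congrArg (Sym2.map ⇑σ) hmap
        rwa [hinv, Sym2.map_pair_eq] at this
      · rintro ⟨t, ht, hmap⟩
        refine ⟨t, ht, ?_⟩
        rw [← Sym2.map_map, hmap, Sym2.map_pair_eq, hσ,
          Equiv.swap_apply_self, Equiv.swap_apply_self]
    rw [himg, (Equiv.injective σ).ne_iff]
  have hsuppA : ∀ z ∈ A.support, ∃ c, z = Sum.inl c := by
    intro z hz
    obtain ⟨w', hadj⟩ := hz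
    replace hadj : A.Adj z w' := hadj
    rw [hA, SimpleGraph.fromEdgeSet_adj] at hadj
    obtain ⟨⟨t, ht, hmap⟩, hne⟩ := hadj
    have hzmem : z ∈ Sym2.map (inclMap u₂ v₂) t := by
      rw [hmap]; exact Sym2.mem_mk_left z w'
    rw [Sym2.mem_map] at hzmem
    obtain ⟨c, _, hc⟩ := hzmem
    exact ⟨c, hc.symm⟩
  have hsuppB : ∀ z ∈ B.support, z = a ∨ z = b ∨ ∃ w, z = Sum.inr w := by
    intro z hz
    obtain ⟨w', hadj⟩ := hz
    replace hadj : B.Adj z w' := hadj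
    rw [hB, SimpleGraph.fromEdgeSet_adj] at hadj
    obtain ⟨⟨t, ht, hmap⟩, hne⟩ := hadj
    have hzmem : z ∈ Sym2.map (glueMap₂ u₂ v₂ u₁ v₁) t := by
      rw [hmap]; exact Sym2.mem_mk_left z w'
    rw [Sym2.mem_map] at hzmem
    obtain ⟨c, _, hc⟩ := hzmem
    simp only [glueMap₂] at hc
    split_ifs at hc
    · exact Or.inl hc.symm
    · exact Or.inr (Or.inl hc.symm)
    · exact Or.inr (Or.inr ⟨_, hc.symm⟩)
  have hs : ∀ z, z ∈ A.support → z ∈ B.support → z = a ∨ z = b := by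
    intro z hzA hzB
    obtain ⟨c, rfl⟩ := hsuppA z hzA
    rcases hsuppB _ hzB with h | h | ⟨w, h⟩
    · exact Or.inl h
    · exact Or.inr h
    · exact absurd h (by simp)
  rw [SimpleGraph.fromEdgeSet_union, SimpleGraph.fromEdgeSet_union, ← hA, ← hB, hB']
  exact WhitneyTwist.main_iff hs
end
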